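/- arXiv:1908.00477 — 4 statements merged into one kernel-verified Lean document; each statement's English description precedes it below -/
import Mathlib

section
/- For independent pairs (X, X') and (Y, Y') of i.i.d. real-valued random variables with X, X' ~ F and Y, Y' ~ G, all with finite first absolute moments, the energy distance E(X,Y) = 2·E|X − Y| − E|X − X'| − E|Y − Y'| is nonnegative. -/
open MeasureTheory ProbabilityTheory

noncomputable def elen (ν ρ : MeasureTheory.Measure ℝ) : ENNReal :=
  ∫⁻ p, ENNReal.ofReal |p.1 - p.2| ∂(ν.prod ρ)

/-- slice function: indicator of `x ≤ t < y` plus `y ≤ t < x`. -/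
noncomputable def slc (x y t : ℝ) : ENNReal :=
  (if x ≤ t then 1 else 0) * (if t < y then 1 else 0)
    + (if y ≤ t then 1 else 0) * (if t < x then 1 else 0)

lemma slc_eq_indicator (x y t : ℝ) :
    slc x y t = (Set.Ico (min x y) (max x y)).indicator 1 t := by
  unfold slc
  rcases le_or_gt x t with hx | hx <;> rcases le_or_gt y t with hy | hy
  · simp [Set.indicator_apply, Set.mem_Ico, hx, hy, hx.not_gt, hy.not_gt,
      not_lt.mpr (max_le hx hy)]
  · have h1 : min x y ≤ t := le_trans (min_le_left x y) hx
    have h2 : t < max x y := lt_of_lt_of_le hy (le_max_right x y)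
    simp [Set.indicator_apply, Set.mem_Ico, hx, hy, not_le.mpr hy, h1, h2]
  · have h1 : min x y ≤ t := le_trans (min_le_right x y) hy
    have h2 : t < max x y := lt_of_lt_of_le hx (le_max_left x y)
    simp [Set.indicator_apply, Set.mem_Ico, hy, hx, not_le.mpr hx, h1, h2]
  · simp [Set.indicator_apply, Set.mem_Ico, not_le.mpr hx, not_le.mpr hy,
      not_le.mpr (lt_min hx hy)]

lemma lintegral_slc (x y : ℝ) :
    ∫⁻ t, slc x y t = ENNReal.ofReal |x - y| := by
  simp_rw [slc_eq_indicator]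
  rw [lintegral_indicator_one measurableSet_Ico, Real.volume_Ico]
  rw [show max x y - min x y = |x - y| by
    rw [max_comm, min_comm]; exact max_sub_min_eq_abs y x]

lemma measurable_slc : Measurable (fun z : (ℝ × ℝ) × ℝ => slc z.1.1 z.1.2 z.2) := by
  unfold slc
  refine Measurable.add (Measurable.mul ?_ ?_) (Measurable.mul ?_ ?_)
  · exact Measurable.ite (measurableSet_le measurable_fst.fst measurable_snd)
      measurable_const measurable_const
  · exact Measurable.ite (measurableSet_lt measurable_snd measurable_fst.snd)
      measurable_const measurable_const
  · exact Measurable.ite (measurableSet_le measurable_fst.snd measurable_snd)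
      measurable_const measurable_const
  · exact Measurable.ite (measurableSet_lt measurable_snd measurable_fst.fst)
      measurable_const measurable_const

lemma lintegral_prod_indic (ν ρ : MeasureTheory.Measure ℝ) [SFinite ν] [SFinite ρ] (t : ℝ) :
    ∫⁻ (p : ℝ × ℝ), (if p.1 ≤ t then 1 else 0) * (if t < p.2 then 1 else 0) ∂(ν.prod ρ)
      = ν (Set.Iic t) * ρ (Set.Ioi t) := by
  have h : (fun p : ℝ × ℝ => (if p.1 ≤ t then (1:ENNReal) else 0) * (if t < p.2 then 1 else 0))
      = (Set.Iic t ×ˢ Set.Ioi t).indicator 1 := by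
    ext p
    by_cases h1 : p.1 ≤ t <;> by_cases h2 : t < p.2 <;>
      simp [Set.indicator_apply, Set.mem_prod, h1, h2]
  rw [h, lintegral_indicator_one (measurableSet_Iic.prod measurableSet_Ioi),
    MeasureTheory.Measure.prod_prod]

lemma elen_eq (ν ρ : MeasureTheory.Measure ℝ) [IsProbabilityMeasure ν] [IsProbabilityMeasure ρ] :
    elen ν ρ = ∫⁻ t, (ν (Set.Iic t) * ρ (Set.Ioi t) + ρ (Set.Iic t) * ν (Set.Ioi t)) := by
  have h1 : elen ν ρ = ∫⁻ (p : ℝ × ℝ), ∫⁻ t, slc p.1 p.2 t ∂(volume) ∂(ν.prod ρ) := by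
    unfold elen
    refine lintegral_congr fun p => ?_
    exact (lintegral_slc p.1 p.2).symm
  rw [h1, lintegral_lintegral_swap (measurable_slc.aemeasurable)]
  refine lintegral_congr fun t => ?_
  unfold slc
  rw [lintegral_add_left (f := fun p : ℝ × ℝ => (if p.1 ≤ t then (1:ENNReal) else 0) * (if t < p.2 then 1 else 0)) (Measurable.mul
    (Measurable.ite (measurableSet_le measurable_fst measurable_const)
      measurable_const measurable_const)
    (Measurable.ite (measurableSet_lt measurable_const measurable_snd)
      measurable_const measurable_const))]
  rw [lintegral_prod_indic ν ρ t]
  congr 1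
  have h2 : (fun p : ℝ × ℝ => (if p.2 ≤ t then (1:ENNReal) else 0) * (if t < p.1 then 1 else 0))
      = (Set.Ioi t ×ˢ Set.Iic t).indicator 1 := by
    ext p
    by_cases h1 : p.2 ≤ t <;> by_cases h2 : t < p.1 <;>
      simp [Set.indicator_apply, Set.mem_prod, h1, h2]
  rw [h2, lintegral_indicator_one (measurableSet_Ioi.prod measurableSet_Iic),
    MeasureTheory.Measure.prod_prod, mul_comm]

lemma rearrange_aux {a b c d : ENNReal} (hab : a ≤ b) (hdc : d ≤ c) :
    a * c + b * d ≤ a * d + b * c := by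
  obtain ⟨e, rfl⟩ := exists_add_of_le hab
  obtain ⟨f, rfl⟩ := exists_add_of_le hdc
  have key : a * (d + f) + (a + e) * d = a * d + a * f + a * d + e * d := by ring
  have key2 : a * d + (a + e) * (d + f) = (a * d + a * f + a * d + e * d) + e * f := by ring
  rw [key, key2]
  exact le_self_add

lemma pointwise_rearrange {a b : ENNReal} :
    a * (1 - a) + b * (1 - b) ≤ a * (1 - b) + b * (1 - a) := by
  rcases le_total a b with h | h
  · exact rearrange_aux h (tsub_le_tsub_left h 1)
  · rw [add_comm (a * (1 - a)), add_comm (a * (1 - b))]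
    exact rearrange_aux h (tsub_le_tsub_left h 1)

lemma elen_self_add_le (ν ρ : MeasureTheory.Measure ℝ)
    [IsProbabilityMeasure ν] [IsProbabilityMeasure ρ] :
    elen ν ν + elen ρ ρ ≤ 2 * elen ν ρ := by
  rw [elen_eq ν ν, elen_eq ρ ρ, elen_eq ν ρ, ← lintegral_const_mul' 2 _ (by norm_num)]
  refine le_trans (le_lintegral_add _ _) (lintegral_mono fun t => ?_)
  have hν : ν (Set.Ioi t) = 1 - ν (Set.Iic t) := by
    rw [← Set.compl_Iic]; exact prob_compl_eq_one_sub measurableSet_Iic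
  have hρ : ρ (Set.Ioi t) = 1 - ρ (Set.Iic t) := by
    rw [← Set.compl_Iic]; exact prob_compl_eq_one_sub measurableSet_Iic
  set a := ν (Set.Iic t); set b := ρ (Set.Iic t)
  rw [hν, hρ]
  calc a * (1 - a) + a * (1 - a) + (b * (1 - b) + b * (1 - b))
      = (a * (1 - a) + b * (1 - b)) + (a * (1 - a) + b * (1 - b)) := by ring
    _ ≤ (a * (1 - b) + b * (1 - a)) + (a * (1 - b) + b * (1 - a)) :=
        add_le_add pointwise_rearrange pointwise_rearrange
    _ = 2 * (a * (1 - b) + b * (1 - a)) := by ring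

lemma integral_abs_sub_eq {Ω : Type*} [MeasurableSpace Ω] {μ : MeasureTheory.Measure Ω}
    [IsProbabilityMeasure μ] {U V : Ω → ℝ} (hU : Measurable U) (hV : Measurable V)
    (hind : IndepFun U V μ) {ν ρ : MeasureTheory.Measure ℝ}
    (hUν : μ.map U = ν) (hVρ : μ.map V = ρ) :
    ∫ ω, |U ω - V ω| ∂μ = (elen ν ρ).toReal := by
  have hmap : μ.map (fun ω => (U ω, V ω)) = ν.prod ρ := by
    rw [← hUν, ← hVρ]
    exact (indepFun_iff_map_prod_eq_prod_map_map hU.aemeasurable hV.aemeasurable).mp hind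
  have hm : Measurable fun p : ℝ × ℝ => |p.1 - p.2| := (measurable_fst.sub measurable_snd).abs
  have h1 : ∫ ω, |U ω - V ω| ∂μ = ∫ p : ℝ × ℝ, |p.1 - p.2| ∂(ν.prod ρ) := by
    rw [← hmap, integral_map (hU.prodMk hV).aemeasurable hm.aestronglyMeasurable]
  rw [h1, integral_eq_lintegral_of_nonneg_ae
    (Filter.Eventually.of_forall fun p => abs_nonneg _) hm.aestronglyMeasurable]
  rfl

lemma lintegral_abs_map_lt_top {Ω : Type*} [MeasurableSpace Ω] {μ : MeasureTheory.Measure Ω}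
    {U : Ω → ℝ} (hU : Measurable U) (hiU : Integrable U μ) :
    ∫⁻ x, ENNReal.ofReal |x| ∂(μ.map U) < ⊤ := by
  rw [lintegral_map (measurable_abs.ennreal_ofReal) hU]
  have := hiU.2
  rw [hasFiniteIntegral_iff_norm] at this
  simpa [Real.norm_eq_abs] using this

lemma elen_lt_top {ν ρ : MeasureTheory.Measure ℝ} [IsProbabilityMeasure ν] [IsProbabilityMeasure ρ]
    (hν : ∫⁻ x, ENNReal.ofReal |x| ∂ν < ⊤) (hρ : ∫⁻ x, ENNReal.ofReal |x| ∂ρ < ⊤) :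
    elen ν ρ < ⊤ := by
  have hb : ∀ p : ℝ × ℝ, ENNReal.ofReal |p.1 - p.2|
      ≤ ENNReal.ofReal |p.1| + ENNReal.ofReal |p.2| := fun p => by
    rw [← ENNReal.ofReal_add (abs_nonneg _) (abs_nonneg _)]
    exact ENNReal.ofReal_le_ofReal (abs_sub _ _)
  refine lt_of_le_of_lt (lintegral_mono hb) ?_
  rw [lintegral_add_left (measurable_fst.abs.ennreal_ofReal)]
  have hfst : (ν.prod ρ).map Prod.fst = ν := by
    rw [MeasureTheory.Measure.map_fst_prod]; simp
  have hsnd : (ν.prod ρ).map Prod.snd = ρ := by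
    rw [MeasureTheory.Measure.map_snd_prod]; simp
  have h1 : ∫⁻ x, ENNReal.ofReal |x| ∂ν = ∫⁻ (p : ℝ × ℝ), ENNReal.ofReal |p.1| ∂(ν.prod ρ) := by
    conv_lhs => rw [← hfst]
    exact lintegral_map (measurable_abs.ennreal_ofReal) measurable_fst
  have h2 : ∫⁻ x, ENNReal.ofReal |x| ∂ρ = ∫⁻ (p : ℝ × ℝ), ENNReal.ofReal |p.2| ∂(ν.prod ρ) := by
    conv_lhs => rw [← hsnd]
    exact lintegral_map (measurable_abs.ennreal_ofReal) measurable_snd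
  rw [← h1, ← h2]
  exact ENNReal.add_lt_top.mpr ⟨hν, hρ⟩

/-- For independent pairs `(X, X')` and `(Y, Y')` of i.i.d. real-valued
random variables with `X, X' ~ F` and `Y, Y' ~ G`, all integrable, the energy distance
`E(X,Y) = 2 E|X − Y| − E|X − X'| − E|Y − Y'|` is nonnegative. -/
theorem energy_distance_nonneg
    {Ω : Type*} [MeasurableSpace Ω] (μ : Measure Ω) [IsProbabilityMeasure μ]
    (X X' Y Y' : Ω → ℝ) (F G : Measure ℝ)
    (hX : Measurable X) (hX' : Measurable X') (hY : Measurable Y) (hY' : Measurable Y')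
    (hXF : μ.map X = F) (hX'F : μ.map X' = F) (hYG : μ.map Y = G) (hY'G : μ.map Y' = G)
    (hindep : iIndepFun ![X, X', Y, Y'] μ)
    (hiX : Integrable X μ) (hiX' : Integrable X' μ)
    (hiY : Integrable Y μ) (hiY' : Integrable Y' μ) :
    0 ≤ 2 * (∫ ω, |X ω - Y ω| ∂μ)
        - (∫ ω, |X ω - X' ω| ∂μ) - (∫ ω, |Y ω - Y' ω| ∂μ) := by
  have hF : IsProbabilityMeasure F := hXF ▸ Measure.isProbabilityMeasure_map hX.aemeasurable
  have hG : IsProbabilityMeasure G := hYG ▸ Measure.isProbabilityMeasure_map hY.aemeasurable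
  have hXY : IndepFun X Y μ := hindep.indepFun (i := 0) (j := 2) (by decide)
  have hXX' : IndepFun X X' μ := hindep.indepFun (i := 0) (j := 1) (by decide)
  have hYY' : IndepFun Y Y' μ := hindep.indepFun (i := 2) (j := 3) (by decide)
  have e1 : ∫ ω, |X ω - Y ω| ∂μ = (elen F G).toReal :=
    integral_abs_sub_eq hX hY hXY hXF hYG
  have e2 : ∫ ω, |X ω - X' ω| ∂μ = (elen F F).toReal :=
    integral_abs_sub_eq hX hX' hXX' hXF hX'F
  have e3 : ∫ ω, |Y ω - Y' ω| ∂μ = (elen G G).toReal :=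
    integral_abs_sub_eq hY hY' hYY' hYG hY'G
  have hFfin : ∫⁻ x, ENNReal.ofReal |x| ∂F < ⊤ := hXF ▸ lintegral_abs_map_lt_top hX hiX
  have hGfin : ∫⁻ x, ENNReal.ofReal |x| ∂G < ⊤ := hYG ▸ lintegral_abs_map_lt_top hY hiY
  have hFG : elen F G < ⊤ := elen_lt_top hFfin hGfin
  have hkey : elen F F + elen G G ≤ 2 * elen F G := elen_self_add_le F G
  have h2FG : (2 : ENNReal) * elen F G < ⊤ := ENNReal.mul_lt_top (by norm_num) hFG
  have hFF : elen F F < ⊤ :=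
    lt_of_le_of_lt (le_add_right (le_refl _)) (lt_of_le_of_lt hkey h2FG)
  have hGG : elen G G < ⊤ :=
    lt_of_le_of_lt (le_add_left (le_refl _)) (lt_of_le_of_lt hkey h2FG)
  have htr : (elen F F).toReal + (elen G G).toReal ≤ 2 * (elen F G).toReal := by
    rw [← ENNReal.toReal_add hFF.ne hGG.ne]
    calc (elen F F + elen G G).toReal ≤ (2 * elen F G).toReal :=
          ENNReal.toReal_mono h2FG.ne hkey
      _ = 2 * (elen F G).toReal := by rw [ENNReal.toReal_mul]; norm_num
  rw [e1, e2, e3]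
  linarith
end

section
/- For independent pairs (X, X') and (Y, Y') of i.i.d. real-valued integrable random variables with distributions F and G respectively, the energy distance E(X,Y) = 2·E|X − Y| − E|X − X'| − E|Y − Y'| equals zero if and only if F = G. -/
open MeasureTheory ProbabilityTheory Set Filter
open scoped ENNReal Topology

namespace EnergyAux

noncomputable def eFn (F G : Measure ℝ) (t : ℝ) : ℝ :=
  cdf F t * (1 - cdf G t) + cdf G t * (1 - cdf F t)

lemma eFn_nonneg (F G : Measure ℝ) (t : ℝ) : 0 ≤ eFn F G t :=
  add_nonneg (mul_nonneg (cdf_nonneg _ _) (sub_nonneg.2 (cdf_le_one _ _)))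
    (mul_nonneg (cdf_nonneg _ _) (sub_nonneg.2 (cdf_le_one _ _)))

lemma measurable_eFn (F G : Measure ℝ) : Measurable (eFn F G) :=
  ((monotone_cdf F).measurable.mul (measurable_const.sub (monotone_cdf G).measurable)).add
    ((monotone_cdf G).measurable.mul (measurable_const.sub (monotone_cdf F).measurable))

lemma ofReal_abs_sub (x y : ℝ) :
    ENNReal.ofReal |x - y|
      = ∫⁻ t, ((Ico x y).indicator 1 t + (Ico y x).indicator 1 t) := by
  rw [lintegral_add_left (measurable_one.indicator measurableSet_Ico),
    lintegral_indicator_one measurableSet_Ico, lintegral_indicator_one measurableSet_Ico,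
    Real.volume_Ico, Real.volume_Ico]
  rcases le_total x y with h | h
  · rw [abs_sub_comm, abs_of_nonneg (sub_nonneg.2 h),
      ENNReal.ofReal_of_nonpos (sub_nonpos.2 h), add_zero]
  · rw [abs_of_nonneg (sub_nonneg.2 h),
      ENNReal.ofReal_of_nonpos (sub_nonpos.2 h), zero_add]

lemma lintegral_abs_sub {Ω : Type*} [MeasurableSpace Ω] (μ : Measure Ω) [IsProbabilityMeasure μ]
    {X Y : Ω → ℝ} (hX : Measurable X) (hY : Measurable Y)
    {F G : Measure ℝ} [IsProbabilityMeasure F] [IsProbabilityMeasure G]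
    (hXF : μ.map X = F) (hYG : μ.map Y = G) (hind : IndepFun X Y μ) :
    ∫⁻ ω, ENNReal.ofReal |X ω - Y ω| ∂μ = ∫⁻ t, ENNReal.ofReal (eFn F G t) := by
  have hm : ∀ (U V : Ω → ℝ), Measurable U → Measurable V →
      Measurable (fun p : Ω × ℝ => (Ico (U p.1) (V p.1)).indicator (1 : ℝ → ℝ≥0∞) p.2) := by
    intro U V hU hV
    have hs : MeasurableSet {p : Ω × ℝ | U p.1 ≤ p.2 ∧ p.2 < V p.1} :=
      (measurableSet_le (hU.comp measurable_fst) measurable_snd).inter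
        (measurableSet_lt measurable_snd (hV.comp measurable_fst))
    have : (fun p : Ω × ℝ => (Ico (U p.1) (V p.1)).indicator (1 : ℝ → ℝ≥0∞) p.2)
        = ({p : Ω × ℝ | U p.1 ≤ p.2 ∧ p.2 < V p.1}).indicator 1 := by
      funext p
      simp [Set.indicator_apply, Set.mem_Ico]
    rw [this]
    exact measurable_one.indicator hs
  have hswap := lintegral_lintegral_swap (μ := μ) (ν := (volume : Measure ℝ))
    (f := fun ω t => (Ico (X ω) (Y ω)).indicator (1 : ℝ → ℝ≥0∞) t
        + (Ico (Y ω) (X ω)).indicator (1 : ℝ → ℝ≥0∞) t)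
    (((hm X Y hX hY).add (hm Y X hY hX)).aemeasurable)
  calc ∫⁻ ω, ENNReal.ofReal |X ω - Y ω| ∂μ
      = ∫⁻ ω, (∫⁻ t, ((Ico (X ω) (Y ω)).indicator (1 : ℝ → ℝ≥0∞) t
          + (Ico (Y ω) (X ω)).indicator (1 : ℝ → ℝ≥0∞) t) ∂volume) ∂μ := by
        simp_rw [ofReal_abs_sub]
    _ = ∫⁻ t, (∫⁻ ω, ((Ico (X ω) (Y ω)).indicator (1 : ℝ → ℝ≥0∞) t
          + (Ico (Y ω) (X ω)).indicator (1 : ℝ → ℝ≥0∞) t) ∂μ) ∂volume := hswap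
    _ = ∫⁻ t, ENNReal.ofReal (eFn F G t) := by
        refine lintegral_congr fun t => ?_
        have e1 : ∀ (U V : Ω → ℝ), Measurable U → Measurable V →
            ∫⁻ ω, (Ico (U ω) (V ω)).indicator (1 : ℝ → ℝ≥0∞) t ∂μ
              = μ (U ⁻¹' Iic t ∩ V ⁻¹' Ioi t) := by
          intro U V hU hV
          have : (fun ω => (Ico (U ω) (V ω)).indicator (1 : ℝ → ℝ≥0∞) t)
              = (U ⁻¹' Iic t ∩ V ⁻¹' Ioi t).indicator 1 := by
            funext ω
            classical
            rw [Set.indicator_apply, Set.indicator_apply]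
            simp [Set.mem_Ico, Set.mem_inter_iff, Set.mem_preimage, Set.mem_Iic, Set.mem_Ioi]
          rw [this, lintegral_indicator_one
            ((hU measurableSet_Iic).inter (hV measurableSet_Ioi))]
        rw [lintegral_add_left]
        · rw [e1 X Y hX hY, e1 Y X hY hX,
            hind.measure_inter_preimage_eq_mul _ _ measurableSet_Iic measurableSet_Ioi,
            hind.symm.measure_inter_preimage_eq_mul _ _ measurableSet_Iic measurableSet_Ioi]
          have hXI : μ (X ⁻¹' Iic t) = ENNReal.ofReal (cdf F t) := by
            rw [← Measure.map_apply hX measurableSet_Iic, hXF, ofReal_cdf]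
          have hYI : μ (Y ⁻¹' Iic t) = ENNReal.ofReal (cdf G t) := by
            rw [← Measure.map_apply hY measurableSet_Iic, hYG, ofReal_cdf]
          have hXO : μ (X ⁻¹' Ioi t) = ENNReal.ofReal (1 - cdf F t) := by
            rw [← Measure.map_apply hX measurableSet_Ioi, hXF,
              ← Set.compl_Iic, measure_compl measurableSet_Iic (measure_ne_top _ _),
              measure_univ, ← ofReal_cdf,
              ENNReal.ofReal_sub _ (cdf_nonneg F t), ENNReal.ofReal_one]
          have hYO : μ (Y ⁻¹' Ioi t) = ENNReal.ofReal (1 - cdf G t) := by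
            rw [← Measure.map_apply hY measurableSet_Ioi, hYG,
              ← Set.compl_Iic, measure_compl measurableSet_Iic (measure_ne_top _ _),
              measure_univ, ← ofReal_cdf,
              ENNReal.ofReal_sub _ (cdf_nonneg G t), ENNReal.ofReal_one]
          rw [hXI, hYI, hXO, hYO, ← ENNReal.ofReal_mul (cdf_nonneg F t),
            ← ENNReal.ofReal_mul (cdf_nonneg G t),
            ← ENNReal.ofReal_add (mul_nonneg (cdf_nonneg F t) (sub_nonneg.2 (cdf_le_one G t)))
              (mul_nonneg (cdf_nonneg G t) (sub_nonneg.2 (cdf_le_one F t)))]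
          rfl
        · have : (fun ω => (Ico (X ω) (Y ω)).indicator (1 : ℝ → ℝ≥0∞) t)
              = (X ⁻¹' Iic t ∩ Y ⁻¹' Ioi t).indicator 1 := by
            funext ω
            classical
            rw [Set.indicator_apply, Set.indicator_apply]
            simp [Set.mem_Ico, Set.mem_inter_iff, Set.mem_preimage, Set.mem_Iic, Set.mem_Ioi]
          rw [this]
          exact measurable_one.indicator ((hX measurableSet_Iic).inter (hY measurableSet_Ioi))

lemma integral_abs_sub {Ω : Type*} [MeasurableSpace Ω] (μ : Measure Ω) [IsProbabilityMeasure μ]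
    {X Y : Ω → ℝ} (hX : Measurable X) (hY : Measurable Y)
    {F G : Measure ℝ} [IsProbabilityMeasure F] [IsProbabilityMeasure G]
    (hXF : μ.map X = F) (hYG : μ.map Y = G) (hind : IndepFun X Y μ)
    (hint : Integrable (fun ω => |X ω - Y ω|) μ) :
    Integrable (eFn F G) volume ∧ ∫ ω, |X ω - Y ω| ∂μ = ∫ t, eFn F G t := by
  have key := lintegral_abs_sub μ hX hY hXF hYG hind
  have hlt : ∫⁻ ω, ENNReal.ofReal |X ω - Y ω| ∂μ < ∞ :=
    (hasFiniteIntegral_iff_ofReal (ae_of_all _ fun ω => abs_nonneg _)).1 hint.2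
  have hinteg : Integrable (eFn F G) volume := by
    refine ⟨(measurable_eFn F G).aestronglyMeasurable, ?_⟩
    rw [hasFiniteIntegral_iff_ofReal (ae_of_all _ (eFn_nonneg F G)), ← key]
    exact hlt
  refine ⟨hinteg, ?_⟩
  rw [integral_eq_lintegral_of_nonneg_ae (f := fun ω => |X ω - Y ω|) (ae_of_all _ fun ω => abs_nonneg _)
      ((hX.sub hY).abs.aestronglyMeasurable : AEStronglyMeasurable (fun ω => |X ω - Y ω|) μ),
    integral_eq_lintegral_of_nonneg_ae (ae_of_all _ (eFn_nonneg F G))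
      (measurable_eFn F G).aestronglyMeasurable, key]

lemma cdf_eq_of_ae {F G : Measure ℝ} (h : ∀ᵐ t : ℝ, cdf F t = cdf G t) : cdf F = cdf G := by
  ext t
  have hseq : ∀ n : ℕ, ∃ s, s ∈ Ioo t (t + 1 / (n + 1)) ∧ cdf F s = cdf G s := by
    intro n
    by_contra hc
    push_neg at hc
    have hsub : Ioo t (t + 1 / (n + 1)) ⊆ {s | ¬ cdf F s = cdf G s} :=
      fun s hs => hc s hs
    have h0 : volume (Ioo t (t + 1 / (n + 1))) = 0 :=
      measure_mono_null hsub h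
    rw [Real.volume_Ioo] at h0
    have hpos : (0 : ℝ) < 1 / (n + 1) := by positivity
    rw [ENNReal.ofReal_eq_zero] at h0
    linarith
  choose s hs hFG using hseq
  have htend : Tendsto s atTop (𝓝 t) := by
    have h1 : Tendsto (fun n : ℕ => t + 1 / (n + 1 : ℝ)) atTop (𝓝 t) := by
      have := tendsto_one_div_add_atTop_nhds_zero_nat (𝕜 := ℝ)
      have := (tendsto_const_nhds (x := t) (f := atTop (α := ℕ))).add this
      simpa using this
    exact tendsto_of_tendsto_of_tendsto_of_le_of_le tendsto_const_nhds h1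
      (fun n => (hs n).1.le) (fun n => (hs n).2.le)
  have hmem : ∀ᶠ n in atTop, s n ∈ Ici t := .of_forall fun n => (hs n).1.le
  have h1 : Tendsto (fun n => cdf F (s n)) atTop (𝓝 (cdf F t)) :=
    Filter.Tendsto.comp ((cdf F).right_continuous t) (tendsto_nhdsWithin_iff.2 ⟨htend, hmem⟩)
  have h2 : Tendsto (fun n => cdf G (s n)) atTop (𝓝 (cdf G t)) :=
    Filter.Tendsto.comp ((cdf G).right_continuous t) (tendsto_nhdsWithin_iff.2 ⟨htend, hmem⟩)
  have : Tendsto (fun n => cdf F (s n)) atTop (𝓝 (cdf G t)) := by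
    simpa only [hFG] using h2
  exact tendsto_nhds_unique h1 this

end EnergyAux

open EnergyAux

/-- For independent pairs `(X, X')` and `(Y, Y')` of i.i.d. integrable
real random variables with distributions `F` and `G`, the energy distance
`2 E|X − Y| − E|X − X'| − E|Y − Y'|` is zero if and only if `F = G`. -/
theorem energy_distance_eq_zero_iff
    {Ω : Type*} [MeasurableSpace Ω] (μ : Measure Ω) [IsProbabilityMeasure μ]
    (X X' Y Y' : Ω → ℝ) (F G : Measure ℝ)
    (hX : Measurable X) (hX' : Measurable X') (hY : Measurable Y) (hY' : Measurable Y')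
    (hXF : μ.map X = F) (hX'F : μ.map X' = F) (hYG : μ.map Y = G) (hY'G : μ.map Y' = G)
    (hindep : iIndepFun ![X, X', Y, Y'] μ)
    (hiX : Integrable X μ) (hiX' : Integrable X' μ)
    (hiY : Integrable Y μ) (hiY' : Integrable Y' μ) :
    2 * (∫ ω, |X ω - Y ω| ∂μ)
        - (∫ ω, |X ω - X' ω| ∂μ) - (∫ ω, |Y ω - Y' ω| ∂μ) = 0 ↔ F = G := by
  haveI : IsProbabilityMeasure F := hXF ▸ Measure.isProbabilityMeasure_map hX.aemeasurable
  haveI : IsProbabilityMeasure G := hYG ▸ Measure.isProbabilityMeasure_map hY.aemeasurable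
  have iXY : IndepFun X Y μ := by
    have := hindep.indepFun (i := 0) (j := 2) (by decide)
    simpa using this
  have iXX' : IndepFun X X' μ := by
    have := hindep.indepFun (i := 0) (j := 1) (by decide)
    simpa using this
  have iYY' : IndepFun Y Y' μ := by
    have := hindep.indepFun (i := 2) (j := 3) (by decide)
    simpa using this
  obtain ⟨intFG, eqFG⟩ := integral_abs_sub μ hX hY hXF hYG iXY (hiX.sub hiY).abs
  obtain ⟨intFF, eqFF⟩ := integral_abs_sub μ hX hX' hXF hX'F iXX' (hiX.sub hiX').abs
  obtain ⟨intGG, eqGG⟩ := integral_abs_sub μ hY hY' hYG hY'G iYY' (hiY.sub hiY').abs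
  have hpt : ∀ t, 2 * (cdf F t - cdf G t) ^ 2
      = 2 * eFn F G t - eFn F F t - eFn G G t := by
    intro t
    simp only [eFn]
    ring
  have intq : Integrable (fun t => 2 * (cdf F t - cdf G t) ^ 2) volume := by
    refine (((intFG.const_mul 2).sub intFF).sub intGG).congr ?_
    exact ae_of_all _ fun t => (hpt t).symm
  have hcomb : 2 * (∫ t, eFn F G t) - (∫ t, eFn F F t) - (∫ t, eFn G G t)
      = ∫ t, 2 * (cdf F t - cdf G t) ^ 2 := by
    have h2 : Integrable (fun t => 2 * eFn F G t) volume := intFG.const_mul 2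
    have h1 : Integrable (fun t => 2 * eFn F G t - eFn F F t) volume := h2.sub intFF
    simp_rw [hpt]
    rw [integral_sub h1 intGG, integral_sub h2 intFF, integral_const_mul]
  rw [eqFG, eqFF, eqGG, hcomb]
  constructor
  · intro h
    have hae := (integral_eq_zero_iff_of_nonneg (fun t => by positivity) intq).1 h
    have hae' : ∀ᵐ t : ℝ, cdf F t = cdf G t := by
      filter_upwards [hae] with t ht
      have : 2 * (cdf F t - cdf G t) ^ 2 = 0 := ht
      nlinarith [sq_nonneg (cdf F t - cdf G t)]
    exact Measure.eq_of_cdf F G (cdf_eq_of_ae hae')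
  · intro h
    subst h
    simp
end

section
/- Under H₀ (all K samples drawn i.i.d. from a common distribution with square-integrable kernel), the covariance between the pooled-sample U-statistic U_n and the k-th sample U-statistic U_{n_k} satisfies Cov(U_n, U_{n_k}) = (4/n)σ_{g_k}² + O(1/n²), where σ_{g_k}² = Var(g_k(X)) with g_k(x) = E‖x − X‖. -/
open MeasureTheory ProbabilityTheory Finset

/-- The U-statistic with kernel `‖x − y‖` over the observations indexed by a finite set
`s`, expressed via the off-diagonal double sum (equal to the usual
`(card choose 2)⁻¹ Σ_{i<j}` form by symmetry of the kernel). -/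
noncomputable def ustatOn {d : ℕ} (s : Finset ℕ)
    (X : ℕ → EuclideanSpace ℝ (Fin d)) : ℝ :=
  ((s.card : ℝ) * ((s.card : ℝ) - 1))⁻¹ * ∑ p ∈ s.offDiag, ‖X p.1 - X p.2‖

lemma count_offDiag (n : ℕ) (hn : 2 ≤ n) (k l : ℕ) (hk : k ∈ Finset.range n)
    (hl : l ∈ Finset.range n) (hkl : k ≠ l) (F : ℕ → ℕ → ℝ) (a b c : ℝ)
    (hFkl : F k l = a) (hFlk : F l k = a)
    (hkj : ∀ j ∈ Finset.range n, j ≠ k → j ≠ l → F k j = b)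
    (hlj : ∀ j ∈ Finset.range n, j ≠ k → j ≠ l → F l j = b)
    (hjk : ∀ j ∈ Finset.range n, j ≠ k → j ≠ l → F j k = b)
    (hjl : ∀ j ∈ Finset.range n, j ≠ k → j ≠ l → F j l = b)
    (hdis : ∀ i ∈ Finset.range n, ∀ j ∈ Finset.range n,
      i ≠ j → i ≠ k → i ≠ l → j ≠ k → j ≠ l → F i j = c) :
    ∑ p ∈ (Finset.range n).offDiag, F p.1 p.2
      = 2*a + 4*((n:ℝ)-2)*b + ((n:ℝ)-2)*((n:ℝ)-3)*c := by
  classical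
  have hlk' : l ∈ (Finset.range n).erase k := mem_erase.mpr ⟨hkl.symm, hl⟩
  set r' : Finset ℕ := ((Finset.range n).erase k).erase l with hr'
  have hsplit : ∀ f : ℕ → ℝ,
      ∑ i ∈ Finset.range n, f i = f k + (f l + ∑ i ∈ r', f i) := by
    intro f
    rw [← Finset.add_sum_erase _ f hk, ← Finset.add_sum_erase _ f hlk']
  have hmem' : ∀ i ∈ r', i ≠ k ∧ i ≠ l ∧ i ∈ Finset.range n := by
    intro i hi
    rw [hr'] at hi
    have h1 := Finset.mem_erase.mp hi
    have h2 := Finset.mem_erase.mp h1.2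
    exact ⟨h2.1, h1.1, h2.2⟩
  have hcard : (r'.card : ℝ) = (n:ℝ) - 2 := by
    rw [hr', Finset.card_erase_of_mem hlk', Finset.card_erase_of_mem hk, card_range]
    have h12 : n - 1 - 1 = n - 2 := by omega
    rw [h12, Nat.cast_sub hn]
    norm_num
  have step0 : ∑ p ∈ (Finset.range n).offDiag, F p.1 p.2
      = ∑ p ∈ (Finset.range n) ×ˢ (Finset.range n),
          (if p.1 ≠ p.2 then F p.1 p.2 else 0) := by
    rw [show (Finset.range n).offDiag
        = ((Finset.range n) ×ˢ (Finset.range n)).filter (fun p => p.1 ≠ p.2) from by ext p; simp [and_assoc],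
      Finset.sum_filter]
  rw [step0, Finset.sum_product]
  rw [hsplit (fun i => ∑ j ∈ Finset.range n, if i ≠ j then F i j else 0)]
  simp only [hsplit]
  have e1 : (if k ≠ k then F k k else 0) = 0 := by simp
  have e2 : (if k ≠ l then F k l else 0) = a := by rw [if_pos hkl, hFkl]
  have e3 : (if l ≠ k then F l k else 0) = a := by rw [if_pos hkl.symm, hFlk]
  have e4 : (if l ≠ l then F l l else 0) = 0 := by simp
  have s1 : ∑ j ∈ r', (if k ≠ j then F k j else 0) = ((n:ℝ)-2) * b := by
    rw [Finset.sum_congr rfl (fun j hj => ?_), Finset.sum_const, nsmul_eq_mul, hcard]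
    obtain ⟨h1, h2, h3⟩ := hmem' j hj
    rw [if_pos (Ne.symm h1), hkj j h3 h1 h2]
  have s2 : ∑ j ∈ r', (if l ≠ j then F l j else 0) = ((n:ℝ)-2) * b := by
    rw [Finset.sum_congr rfl (fun j hj => ?_), Finset.sum_const, nsmul_eq_mul, hcard]
    obtain ⟨h1, h2, h3⟩ := hmem' j hj
    rw [if_pos (Ne.symm h2), hlj j h3 h1 h2]
  have s3 : ∑ i ∈ r', ((if i ≠ k then F i k else 0) + ((if i ≠ l then F i l else 0)
      + ∑ j ∈ r', if i ≠ j then F i j else 0))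
      = ((n:ℝ)-2) * (b + (b + (((n:ℝ)-2) * c - c))) := by
    rw [Finset.sum_congr rfl (fun i hi => ?_), Finset.sum_const, nsmul_eq_mul, hcard]
    obtain ⟨hik, hil, hir⟩ := hmem' i hi
    rw [if_pos hik, if_pos hil, hjk i hir hik hil, hjl i hir hik hil]
    have hin : ∑ j ∈ r', (if i ≠ j then F i j else 0)
        = ((n:ℝ)-2) * c - c := by
      have h1 : ∀ j ∈ r', (if i ≠ j then F i j else 0)
          = c - (if i = j then c else 0) := by
        intro j hj
        obtain ⟨hjk', hjl', hjr⟩ := hmem' j hj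
        by_cases h : i = j
        · simp [h]
        · rw [if_pos h, if_neg h, hdis i hir j hjr h hik hil hjk' hjl']
          ring
      rw [Finset.sum_congr rfl h1, Finset.sum_sub_distrib, Finset.sum_const,
        Finset.sum_ite_eq r' i (fun _ => c), if_pos hi, nsmul_eq_mul, hcard]
    rw [hin]
  rw [e1, e2, e3, e4, s1, s2, s3]
  ring

set_option maxHeartbeats 1000000 in
/-- Under `H₀` (all observations i.i.d. from a common distribution
with square-integrable kernel), the covariance of the pooled U-statistic `U_n` and a
subsample U-statistic `U_{n_k}` satisfies `Cov(U_n, U_{n_k}) = (4/n) σ_g² + O(1/n²)`,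
where `σ_g² = Var(g(X))` with `g(x) = E‖x − X‖`. -/
theorem cov_pooled_subsample_ustat {d : ℕ}
    {Ω : Type*} [MeasurableSpace Ω] (μ : Measure Ω) [IsProbabilityMeasure μ]
    (X : ℕ → Ω → EuclideanSpace ℝ (Fin d)) (hmeas : ∀ i, Measurable (X i))
    (ν : Measure (EuclideanSpace ℝ (Fin d))) [IsProbabilityMeasure ν]
    (hid : ∀ i, μ.map (X i) = ν)
    (hindep : iIndepFun X μ)
    (hker2 : Integrable (fun p => ‖p.1 - p.2‖ ^ 2) (ν.prod ν))
    (g : EuclideanSpace ℝ (Fin d) → ℝ) (hg : ∀ x, g x = ∫ y, ‖x - y‖ ∂ν)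
    (θ₀ : ℝ) (hθ₀ : θ₀ = ∫ x, g x ∂ν)
    (σg2 : ℝ) (hσg2 : σg2 = ∫ x, (g x - θ₀) ^ 2 ∂ν) :
    ∃ C : ℝ, ∀ n : ℕ, 2 ≤ n → ∀ s : Finset ℕ, s ⊆ Finset.range n → 2 ≤ s.card →
      |((∫ ω, (ustatOn (Finset.range n) (fun i => X i ω)) *
              (ustatOn s (fun i => X i ω)) ∂μ)
          - (∫ ω, ustatOn (Finset.range n) (fun i => X i ω) ∂μ) *
            (∫ ω, ustatOn s (fun i => X i ω) ∂μ))
          - (4 / n) * σg2| ≤ C / n ^ 2 := by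
  classical
  have hmx : ∀ i j : ℕ, Measurable fun ω => ‖X i ω - X j ω‖ :=
    fun i j => ((hmeas i).sub (hmeas j)).norm
  have hasm : ∀ i j : ℕ, AEStronglyMeasurable (fun ω => ‖X i ω - X j ω‖) μ :=
    fun i j => (hmx i j).aestronglyMeasurable
  have hker_cont : Continuous fun p : (EuclideanSpace ℝ (Fin d)) × (EuclideanSpace ℝ (Fin d)) => ‖p.1 - p.2‖ :=
    (continuous_fst.sub continuous_snd).norm
  have pairmap : ∀ i j : ℕ, i ≠ j →
      μ.map (fun ω => (X i ω, X j ω)) = ν.prod ν := by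
    intro i j hij
    have h := (indepFun_iff_map_prod_eq_prod_map_map (hmeas i).aemeasurable
      (hmeas j).aemeasurable).mp (hindep.indepFun hij)
    rw [h, hid i, hid j]
  have hker1 : Integrable (fun p : (EuclideanSpace ℝ (Fin d)) × (EuclideanSpace ℝ (Fin d)) => ‖p.1 - p.2‖) (ν.prod ν) := by
    refine Integrable.mono' ((integrable_const (1:ℝ)).add hker2)
      hker_cont.aestronglyMeasurable (Filter.Eventually.of_forall fun p => ?_)
    simp only [Real.norm_eq_abs, abs_norm, Pi.add_apply]
    nlinarith [norm_nonneg (p.1 - p.2), sq_nonneg (‖p.1 - p.2‖ - 1)]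
  set ζ₂ : ℝ := ∫ p : (EuclideanSpace ℝ (Fin d)) × (EuclideanSpace ℝ (Fin d)), ‖p.1 - p.2‖ ^ 2 ∂(ν.prod ν) with hζ₂
  set ζ₁ : ℝ := ∫ x, g x ^ 2 ∂ν with hζ₁
  have hθprod : ∫ p : (EuclideanSpace ℝ (Fin d)) × (EuclideanSpace ℝ (Fin d)), ‖p.1 - p.2‖ ∂(ν.prod ν) = θ₀ := by
    rw [integral_prod _ hker1, hθ₀]
    exact integral_congr_ae (Filter.Eventually.of_forall fun x => (hg x).symm)
  have hsqint : ∀ i j : ℕ, i ≠ j →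
      Integrable (fun ω => ‖X i ω - X j ω‖ ^ 2) μ := by
    intro i j hij
    have h1 : Integrable (fun p : (EuclideanSpace ℝ (Fin d)) × (EuclideanSpace ℝ (Fin d)) => ‖p.1 - p.2‖ ^ 2)
        (μ.map (fun ω => (X i ω, X j ω))) := by rw [pairmap i j hij]; exact hker2
    exact (integrable_map_measure (hker_cont.pow 2).aestronglyMeasurable
      (((hmeas i).prodMk (hmeas j)).aemeasurable)).mp h1
  have h1int : ∀ i j : ℕ, i ≠ j →
      Integrable (fun ω => ‖X i ω - X j ω‖) μ := by
    intro i j hij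
    refine Integrable.mono' ((integrable_const (1:ℝ)).add (hsqint i j hij))
      (hasm i j) (Filter.Eventually.of_forall fun ω => ?_)
    simp only [Real.norm_eq_abs, abs_norm, Pi.add_apply]
    nlinarith [norm_nonneg (X i ω - X j ω), sq_nonneg (‖X i ω - X j ω‖ - 1)]
  have hmul_int : ∀ i j k l : ℕ, i ≠ j → k ≠ l →
      Integrable (fun ω => ‖X i ω - X j ω‖ * ‖X k ω - X l ω‖) μ := by
    intro i j k l hij hkl
    refine Integrable.mono'
      (((hsqint i j hij).add (hsqint k l hkl)).const_mul (1/2 : ℝ))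
      ((hasm i j).mul (hasm k l)) (Filter.Eventually.of_forall fun ω => ?_)
    simp only [Real.norm_eq_abs, Pi.add_apply]
    rw [abs_mul, abs_norm, abs_norm]
    nlinarith [sq_nonneg (‖X i ω - X j ω‖ - ‖X k ω - X l ω‖)]
  have hE1 : ∀ i j : ℕ, i ≠ j → ∫ ω, ‖X i ω - X j ω‖ ∂μ = θ₀ := by
    intro i j hij
    have h := integral_map (μ := μ) (f := fun p : (EuclideanSpace ℝ (Fin d)) × (EuclideanSpace ℝ (Fin d)) => ‖p.1 - p.2‖)
      (((hmeas i).prodMk (hmeas j)).aemeasurable) hker_cont.aestronglyMeasurable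
    rw [pairmap i j hij] at h
    calc ∫ ω, ‖X i ω - X j ω‖ ∂μ = ∫ p : (EuclideanSpace ℝ (Fin d)) × (EuclideanSpace ℝ (Fin d)), ‖p.1 - p.2‖ ∂(ν.prod ν) := h.symm
      _ = θ₀ := hθprod
  have hE2 : ∀ i j : ℕ, i ≠ j →
      ∫ ω, ‖X i ω - X j ω‖ * ‖X i ω - X j ω‖ ∂μ = ζ₂ := by
    intro i j hij
    have h := integral_map (μ := μ) (f := fun p : (EuclideanSpace ℝ (Fin d)) × (EuclideanSpace ℝ (Fin d)) => ‖p.1 - p.2‖ ^ 2)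
      (((hmeas i).prodMk (hmeas j)).aemeasurable)
      (hker_cont.pow 2).aestronglyMeasurable
    rw [pairmap i j hij] at h
    calc ∫ ω, ‖X i ω - X j ω‖ * ‖X i ω - X j ω‖ ∂μ
        = ∫ ω, ‖X i ω - X j ω‖ ^ 2 ∂μ := by
          refine integral_congr_ae (Filter.Eventually.of_forall fun ω => ?_)
          ring
      _ = ∫ p : (EuclideanSpace ℝ (Fin d)) × (EuclideanSpace ℝ (Fin d)), ‖p.1 - p.2‖ ^ 2 ∂(ν.prod ν) := h.symm
      _ = ζ₂ := hζ₂.symm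
  obtain ⟨x₀, hx₀⟩ : ∃ x₀ : EuclideanSpace ℝ (Fin d), Integrable (fun y => ‖x₀ - y‖ ^ 2) ν := by
    have h := hker2.prod_right_ae
    obtain ⟨x₀, hx₀⟩ := h.exists
    exact ⟨x₀, hx₀⟩
  have hslice_sq : ∀ x : EuclideanSpace ℝ (Fin d), Integrable (fun y => ‖x - y‖ ^ 2) ν := by
    intro x
    refine Integrable.mono'
      ((integrable_const (2 * ‖x - x₀‖ ^ 2)).add (hx₀.const_mul 2))
      (((continuous_const.sub continuous_id).norm.pow 2)).aestronglyMeasurable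
      (Filter.Eventually.of_forall fun y => ?_)
    simp only [Real.norm_eq_abs, Pi.add_apply, abs_pow, abs_norm]
    have h1 : ‖x - y‖ ≤ ‖x - x₀‖ + ‖x₀ - y‖ := by
      calc ‖x - y‖ = ‖(x - x₀) + (x₀ - y)‖ := by abel_nf
        _ ≤ ‖x - x₀‖ + ‖x₀ - y‖ := norm_add_le _ _
    nlinarith [norm_nonneg (x - y), norm_nonneg (x - x₀), norm_nonneg (x₀ - y),
      sq_nonneg (‖x - x₀‖ - ‖x₀ - y‖)]
  have hslice1 : ∀ x : EuclideanSpace ℝ (Fin d), Integrable (fun y => ‖x - y‖) ν := by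
    intro x
    refine Integrable.mono' ((integrable_const (1:ℝ)).add (hslice_sq x))
      ((continuous_const.sub continuous_id).norm).aestronglyMeasurable
      (Filter.Eventually.of_forall fun y => ?_)
    simp only [Real.norm_eq_abs, abs_norm, Pi.add_apply]
    nlinarith [norm_nonneg (x - y), sq_nonneg (‖x - y‖ - 1)]
  have hgsq_le : ∀ x : EuclideanSpace ℝ (Fin d), g x ^ 2 ≤ ∫ y, ‖x - y‖ ^ 2 ∂ν := by
    intro x
    have hml : MemLp (fun y : EuclideanSpace ℝ (Fin d) => ‖x - y‖) 2 ν :=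
      (memLp_two_iff_integrable_sq
        ((continuous_const.sub continuous_id).norm).aestronglyMeasurable).2
        (hslice_sq x)
    have hv := variance_nonneg (fun y : EuclideanSpace ℝ (Fin d) => ‖x - y‖) ν
    rw [variance_eq_sub hml] at hv
    simp only [Pi.pow_apply] at hv
    rw [hg x]
    linarith
  have hlip : LipschitzWith 1 g := by
    refine LipschitzWith.of_dist_le_mul fun x x' => ?_
    rw [Real.dist_eq, dist_eq_norm, NNReal.coe_one, one_mul, hg, hg,
      ← integral_sub (hslice1 x) (hslice1 x')]
    calc |∫ y, (‖x - y‖ - ‖x' - y‖) ∂ν|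
        ≤ ∫ y, |‖x - y‖ - ‖x' - y‖| ∂ν := by
          simpa [Real.norm_eq_abs] using
            norm_integral_le_integral_norm (fun y => ‖x - y‖ - ‖x' - y‖) (μ := ν)
      _ ≤ ∫ _y, ‖x - x'‖ ∂ν := by
          refine integral_mono_of_nonneg
            (Filter.Eventually.of_forall fun y => abs_nonneg _)
            (integrable_const _)
            (Filter.Eventually.of_forall fun y => ?_)
          have h2 := abs_norm_sub_norm_le (x - y) (x' - y)
          calc |‖x - y‖ - ‖x' - y‖| ≤ ‖(x - y) - (x' - y)‖ := h2
            _ = ‖x - x'‖ := by abel_nf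
      _ = ‖x - x'‖ := by simp
  have hgcont : Continuous g := hlip.continuous
  have hgnn : ∀ x, 0 ≤ g x := by
    intro x
    rw [hg x]
    exact integral_nonneg fun y => norm_nonneg _
  have hGint : Integrable (fun x => ∫ y, ‖x - y‖ ^ 2 ∂ν) ν :=
    hker2.integral_prod_left
  have hg2int : Integrable (fun x => g x ^ 2) ν := by
    refine Integrable.mono' hGint (hgcont.pow 2).aestronglyMeasurable
      (Filter.Eventually.of_forall fun x => ?_)
    rw [Real.norm_eq_abs, abs_pow, abs_of_nonneg (hgnn x)]
    exact hgsq_le x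
  have hgint : Integrable g ν := by
    refine Integrable.mono' ((integrable_const (1:ℝ)).add hg2int)
      hgcont.aestronglyMeasurable (Filter.Eventually.of_forall fun x => ?_)
    rw [Real.norm_eq_abs, abs_of_nonneg (hgnn x), Pi.add_apply]
    nlinarith [hgnn x, sq_nonneg (g x - 1)]
  have hσ : σg2 = ζ₁ - θ₀ ^ 2 := by
    rw [hσg2]
    have hexp : ∀ x : EuclideanSpace ℝ (Fin d), (g x - θ₀) ^ 2 = g x ^ 2 - (2 * θ₀) * g x + θ₀ ^ 2 :=
      fun x => by ring
    simp_rw [hexp]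
    have h1 : Integrable (fun x => g x ^ 2 - 2 * θ₀ * g x) ν :=
      hg2int.sub (hgint.const_mul (2 * θ₀))
    rw [integral_add h1 (integrable_const _),
      integral_sub hg2int (hgint.const_mul (2 * θ₀)),
      integral_const_mul (2 * θ₀) g, integral_const]
    simp only [measure_univ, ENNReal.toReal_one, smul_eq_mul, one_mul, probReal_univ]
    rw [← hζ₁, ← hθ₀]
    ring
  have hE_sh : ∀ i j l' : ℕ, i ≠ j → i ≠ l' → j ≠ l' →
      ∫ ω, ‖X i ω - X j ω‖ * ‖X i ω - X l' ω‖ ∂μ = ζ₁ := by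
    intro i j l' hij hil hjl
    have hφm : Measurable (fun ω => (X i ω, (X j ω, X l' ω))) :=
      (hmeas i).prodMk ((hmeas j).prodMk (hmeas l'))
    have hIF : IndepFun (X i) (fun ω => (X j ω, X l' ω)) μ :=
      (hindep.indepFun_prodMk hmeas j l' i hij.symm hil.symm).symm
    have hmap3 : μ.map (fun ω => (X i ω, (X j ω, X l' ω))) = ν.prod (ν.prod ν) := by
      rw [(indepFun_iff_map_prod_eq_prod_map_map (hmeas i).aemeasurable
        ((hmeas j).prodMk (hmeas l')).aemeasurable).mp hIF, hid i, pairmap j l' hjl]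
    have hcont3 : Continuous (fun p : (EuclideanSpace ℝ (Fin d)) × ((EuclideanSpace ℝ (Fin d)) × (EuclideanSpace ℝ (Fin d))) => ‖p.1 - p.2.1‖ * ‖p.1 - p.2.2‖) :=
      ((continuous_fst.sub (continuous_snd.fst)).norm).mul
        ((continuous_fst.sub (continuous_snd.snd)).norm)
    have hInt3 : Integrable (fun p : (EuclideanSpace ℝ (Fin d)) × ((EuclideanSpace ℝ (Fin d)) × (EuclideanSpace ℝ (Fin d))) => ‖p.1 - p.2.1‖ * ‖p.1 - p.2.2‖)
        (ν.prod (ν.prod ν)) := by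
      rw [← hmap3]
      exact (integrable_map_measure hcont3.aestronglyMeasurable
        hφm.aemeasurable).mpr (hmul_int i j i l' hij hil)
    have h := integral_map (μ := μ) (f := fun p : (EuclideanSpace ℝ (Fin d)) × ((EuclideanSpace ℝ (Fin d)) × (EuclideanSpace ℝ (Fin d))) => ‖p.1 - p.2.1‖ * ‖p.1 - p.2.2‖)
      hφm.aemeasurable hcont3.aestronglyMeasurable
    rw [hmap3] at h
    calc ∫ ω, ‖X i ω - X j ω‖ * ‖X i ω - X l' ω‖ ∂μ
        = ∫ p : (EuclideanSpace ℝ (Fin d)) × ((EuclideanSpace ℝ (Fin d)) × (EuclideanSpace ℝ (Fin d))), ‖p.1 - p.2.1‖ * ‖p.1 - p.2.2‖ ∂(ν.prod (ν.prod ν)) :=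
          h.symm
      _ = ∫ x, ∫ q : (EuclideanSpace ℝ (Fin d)) × (EuclideanSpace ℝ (Fin d)), ‖x - q.1‖ * ‖x - q.2‖ ∂(ν.prod ν) ∂ν :=
          integral_prod _ hInt3
      _ = ∫ x, g x ^ 2 ∂ν := by
          refine integral_congr_ae (Filter.Eventually.of_forall fun x => ?_)
          show (∫ q : (EuclideanSpace ℝ (Fin d)) × (EuclideanSpace ℝ (Fin d)),
            ‖x - q.1‖ * ‖x - q.2‖ ∂(ν.prod ν)) = g x ^ 2
          rw [integral_prod_mul (fun y : EuclideanSpace ℝ (Fin d) => ‖x - y‖) (fun z : EuclideanSpace ℝ (Fin d) => ‖x - z‖),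
            ← hg x]
          ring
      _ = ζ₁ := hζ₁.symm
  have hE_dis : ∀ i j k l : ℕ, i ≠ j → k ≠ l → i ≠ k → i ≠ l → j ≠ k → j ≠ l →
      ∫ ω, ‖X i ω - X j ω‖ * ‖X k ω - X l ω‖ ∂μ = θ₀ * θ₀ := by
    intro i j k l hij hkl hik hil hjk hjl
    have hIF : IndepFun (fun ω => (X i ω, X j ω)) (fun ω => (X k ω, X l ω)) μ :=
      hindep.indepFun_prodMk_prodMk hmeas i j k l hik hil hjk hjl
    have hIF2 : IndepFun (fun ω => ‖X i ω - X j ω‖) (fun ω => ‖X k ω - X l ω‖) μ :=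
      hIF.comp hker_cont.measurable hker_cont.measurable
    have h := hIF2.integral_mul_eq_mul_integral (hasm i j) (hasm k l)
    calc ∫ ω, ‖X i ω - X j ω‖ * ‖X k ω - X l ω‖ ∂μ
        = (∫ ω, ‖X i ω - X j ω‖ ∂μ) * ∫ ω, ‖X k ω - X l ω‖ ∂μ := h
      _ = θ₀ * θ₀ := by rw [hE1 i j hij, hE1 k l hkl]
  have EU : ∀ t : Finset ℕ, 2 ≤ t.card →
      ∫ ω, ustatOn t (fun i => X i ω) ∂μ = θ₀ := by
    intro t ht
    have hM2 : (2:ℝ) ≤ (t.card : ℝ) := by exact_mod_cast ht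
    have hM0 : (t.card : ℝ) ≠ 0 := by linarith
    have hM1 : (t.card : ℝ) - 1 ≠ 0 := by linarith
    have hcast : ((t.card * t.card - t.card : ℕ) : ℝ)
        = (t.card:ℝ) * (t.card:ℝ) - (t.card:ℝ) := by
      have hle : t.card ≤ t.card * t.card := Nat.le_mul_of_pos_left _ (by omega)
      rw [Nat.cast_sub hle]
      push_cast
      ring
    simp only [ustatOn]
    rw [integral_const_mul,
      integral_finset_sum _ (fun p hp => h1int p.1 p.2 (Finset.mem_offDiag.mp hp).2.2),
      Finset.sum_congr rfl (fun p hp => hE1 p.1 p.2 (Finset.mem_offDiag.mp hp).2.2),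
      Finset.sum_const, Finset.offDiag_card, nsmul_eq_mul, hcast]
    field_simp
  refine ⟨2 * |2 * ζ₂ - 4 * σg2 - 2 * θ₀ ^ 2|, ?_⟩
  intro n hn s hs hsc
  have hN2 : (2:ℝ) ≤ (n:ℝ) := by exact_mod_cast hn
  have hN0 : (n:ℝ) ≠ 0 := by linarith
  have hN1 : (n:ℝ) - 1 ≠ 0 := by linarith
  have hM2 : (2:ℝ) ≤ (s.card:ℝ) := by exact_mod_cast hsc
  have hM0 : (s.card:ℝ) ≠ 0 := by linarith
  have hM1 : (s.card:ℝ) - 1 ≠ 0 := by linarith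
  have count : ∀ k l : ℕ, k ∈ Finset.range n → l ∈ Finset.range n → k ≠ l →
      ∑ p ∈ (Finset.range n).offDiag,
        (∫ ω, ‖X p.1 ω - X p.2 ω‖ * ‖X k ω - X l ω‖ ∂μ)
      = 2*ζ₂ + 4*((n:ℝ)-2)*ζ₁ + ((n:ℝ)-2)*((n:ℝ)-3)*(θ₀*θ₀) := by
    intro k l hk hl hkl
    refine count_offDiag n hn k l hk hl hkl
      (fun i j => ∫ ω, ‖X i ω - X j ω‖ * ‖X k ω - X l ω‖ ∂μ) ζ₂ ζ₁ (θ₀*θ₀)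
      ?_ ?_ ?_ ?_ ?_ ?_ ?_
    · exact hE2 k l hkl
    · have hswap : ∀ ω : Ω, ‖X l ω - X k ω‖ = ‖X k ω - X l ω‖ :=
        fun ω => norm_sub_rev _ _
      simp only [hswap]
      exact hE2 k l hkl
    · intro j _ hjk hjl
      exact hE_sh k j l hjk.symm hkl hjl
    · intro j _ hjk hjl
      have hswap : ∀ ω : Ω, ‖X k ω - X l ω‖ = ‖X l ω - X k ω‖ :=
        fun ω => norm_sub_rev _ _
      simp only [hswap]
      exact hE_sh l j k hjl.symm hkl.symm hjk
    · intro j _ hjk hjl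
      have hswap : ∀ ω : Ω, ‖X j ω - X k ω‖ = ‖X k ω - X j ω‖ :=
        fun ω => norm_sub_rev _ _
      simp only [hswap]
      exact hE_sh k j l hjk.symm hkl hjl
    · intro j _ hjk hjl
      have hswap1 : ∀ ω : Ω, ‖X j ω - X l ω‖ = ‖X l ω - X j ω‖ :=
        fun ω => norm_sub_rev _ _
      have hswap2 : ∀ ω : Ω, ‖X k ω - X l ω‖ = ‖X l ω - X k ω‖ :=
        fun ω => norm_sub_rev _ _
      simp only [hswap1, hswap2]
      exact hE_sh l j k hjl.symm hkl.symm hjk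
    · intro i _ j _ hij hik hil hjk hjl
      exact hE_dis i j k l hij hkl hik hil hjk hjl
  have hprodint : ∫ ω, (ustatOn (Finset.range n) (fun i => X i ω)) *
        (ustatOn s (fun i => X i ω)) ∂μ
      = (((n:ℝ)*((n:ℝ)-1))⁻¹ * (((s.card:ℝ))*((s.card:ℝ)-1))⁻¹) *
        ∑ p ∈ (Finset.range n).offDiag, ∑ q ∈ s.offDiag,
          (∫ ω, ‖X p.1 ω - X p.2 ω‖ * ‖X q.1 ω - X q.2 ω‖ ∂μ) := by
    have hint : ∀ ω : Ω, (ustatOn (Finset.range n) (fun i => X i ω)) *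
        (ustatOn s (fun i => X i ω))
        = (((n:ℝ)*((n:ℝ)-1))⁻¹ * (((s.card:ℝ))*((s.card:ℝ)-1))⁻¹) *
          ∑ p ∈ (Finset.range n).offDiag, ∑ q ∈ s.offDiag,
            ‖X p.1 ω - X p.2 ω‖ * ‖X q.1 ω - X q.2 ω‖ := by
      intro ω
      simp only [ustatOn, Finset.card_range]
      rw [mul_mul_mul_comm, Finset.sum_mul_sum]
    simp only [hint]
    rw [integral_const_mul, integral_finset_sum _ (fun p hp =>
      integrable_finset_sum _ (fun q hq => hmul_int p.1 p.2 q.1 q.2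
        (Finset.mem_offDiag.mp hp).2.2 (Finset.mem_offDiag.mp hq).2.2))]
    congr 1
    refine Finset.sum_congr rfl fun p hp => ?_
    exact integral_finset_sum _ (fun q hq => hmul_int p.1 p.2 q.1 q.2
      (Finset.mem_offDiag.mp hp).2.2 (Finset.mem_offDiag.mp hq).2.2)
  have hdouble : ∑ p ∈ (Finset.range n).offDiag, ∑ q ∈ s.offDiag,
      (∫ ω, ‖X p.1 ω - X p.2 ω‖ * ‖X q.1 ω - X q.2 ω‖ ∂μ)
      = ((s.card:ℝ)*(s.card:ℝ) - (s.card:ℝ)) *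
        (2*ζ₂ + 4*((n:ℝ)-2)*ζ₁ + ((n:ℝ)-2)*((n:ℝ)-3)*(θ₀*θ₀)) := by
    rw [Finset.sum_comm]
    have h1 : ∀ q ∈ s.offDiag, ∑ p ∈ (Finset.range n).offDiag,
        (∫ ω, ‖X p.1 ω - X p.2 ω‖ * ‖X q.1 ω - X q.2 ω‖ ∂μ)
        = 2*ζ₂ + 4*((n:ℝ)-2)*ζ₁ + ((n:ℝ)-2)*((n:ℝ)-3)*(θ₀*θ₀) := by
      intro q hq
      obtain ⟨hq1, hq2, hq3⟩ := Finset.mem_offDiag.mp hq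
      exact count q.1 q.2 (hs hq1) (hs hq2) hq3
    rw [Finset.sum_congr rfl h1, Finset.sum_const, nsmul_eq_mul, Finset.offDiag_card]
    congr 1
    have hle : s.card ≤ s.card * s.card := Nat.le_mul_of_pos_left _ (by omega)
    rw [Nat.cast_sub hle]
    push_cast
    ring
  rw [hprodint, hdouble, EU s hsc, EU (Finset.range n) (by rw [Finset.card_range]; exact hn)]
  have hcollapse : ∀ V : ℝ, (((n:ℝ)*((n:ℝ)-1))⁻¹ * (((s.card:ℝ))*((s.card:ℝ)-1))⁻¹) *
      (((s.card:ℝ)*(s.card:ℝ) - (s.card:ℝ)) * V) = ((n:ℝ)*((n:ℝ)-1))⁻¹ * V := by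
    intro V
    field_simp
  rw [hcollapse]
  have hζ₁σ : ζ₁ = σg2 + θ₀ ^ 2 := by rw [hσ]; ring
  rw [hζ₁σ]
  have hNpos : (0:ℝ) < (n:ℝ)*((n:ℝ)-1) := by nlinarith
  have hkey : ((n:ℝ)*((n:ℝ)-1))⁻¹ *
        (2*ζ₂ + 4*((n:ℝ)-2)*(σg2 + θ₀^2) + ((n:ℝ)-2)*((n:ℝ)-3)*(θ₀*θ₀))
        - θ₀*θ₀ - 4/(n:ℝ)*σg2
      = (2*ζ₂ - 4*σg2 - 2*θ₀^2) / ((n:ℝ)*((n:ℝ)-1)) := by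
    field_simp
    ring
  rw [hkey]
  rw [abs_div, abs_of_pos hNpos]
  have hNsq : (0:ℝ) < (n:ℝ)^2 := by nlinarith
  rw [div_le_div_iff₀ hNpos hNsq]
  nlinarith [mul_nonneg (abs_nonneg (2*ζ₂ - 4*σg2 - 2*θ₀^2))
    (mul_nonneg (by linarith : (0:ℝ) ≤ (n:ℝ)) (by linarith : (0:ℝ) ≤ (n:ℝ)-2))]
end

section
/- Let α₁,...,α_K > 0 with Σ_{k=1}^K α_k = 1. Define the (K+1)×(K+1) matrices A and W₀ (indices 0,...,K) by: A[0,0] = 1/2, A[k,k] = 1/α_k − 1/2 for k ≥ 1, and A[i,j] = −1/2 for i ≠ j; W₀ = diag(1, α₁,...,α_K). Then Aᵀ W₀ A = A. -/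
/-- With `A` the symmetric `(K+1)×(K+1)` matrix with diagonal
`(1/2, α₁⁻¹ − 1/2, ..., α_K⁻¹ − 1/2)` and off-diagonal entries `−1/2`, and
`W₀ = diag(1, α₁, ..., α_K)`, one has `Aᵀ W₀ A = A`. -/
theorem jel_A_W0_identity (K : ℕ) (hK : 1 ≤ K) (a : ℕ → ℝ)
    (ha : ∀ k ∈ Finset.Icc 1 K, 0 < a k) (hsum : ∑ k ∈ Finset.Icc 1 K, a k = 1)
    (A W₀ : Matrix (Fin (K + 1)) (Fin (K + 1)) ℝ)
    (hA : ∀ i j : Fin (K + 1), A i j =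
      if i = j then (if i.val = 0 then (1 / 2 : ℝ) else (a i.val)⁻¹ - 1 / 2)
      else (-1 / 2 : ℝ))
    (hW₀ : ∀ i j : Fin (K + 1), W₀ i j =
      if i = j then (if i.val = 0 then (1 : ℝ) else a i.val) else 0) :
    A.transpose * W₀ * A = A := by
  classical
  set d : Fin (K+1) → ℝ := fun i => if i.val = 0 then (1/2 : ℝ) else (a i.val)⁻¹ - 1/2 with hd
  set w : Fin (K+1) → ℝ := fun i => if i.val = 0 then (1 : ℝ) else a i.val with hw
  have hA' : ∀ i j, A i j = if i = j then d i else -1/2 := by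
    intro i j; rw [hA]
  have hW : W₀ = Matrix.diagonal w := by
    ext i j
    rw [hW₀]
    by_cases h : i = j <;> simp [Matrix.diagonal_apply, h, hw]
  have hdw : ∀ k : Fin (K+1), (d k + 1/2) * w k = 1 := by
    intro k
    by_cases h : k.val = 0
    · norm_num [hd, hw, h, (Fin.ext h : k = 0)]
    · have hk : 0 < a k.val := ha k.val (Finset.mem_Icc.mpr
        ⟨Nat.one_le_iff_ne_zero.mpr h, Nat.lt_succ_iff.mp k.isLt⟩)
      simp only [hd, hw, h, if_false]
      field_simp
      ring
  have hsw : ∑ k : Fin (K+1), w k = 2 := by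
    rw [Fin.sum_univ_succ]
    have h1 : ∑ k : Fin K, w k.succ = ∑ i ∈ Finset.range K, a (i + 1) :=
      calc ∑ k : Fin K, w k.succ = ∑ k : Fin K, a (↑k + 1) :=
            Finset.sum_congr rfl (fun k _ => by simp [hw])
        _ = ∑ i ∈ Finset.range K, a (i + 1) := Fin.sum_univ_eq_sum_range (fun n => a (n + 1)) K
    have h2 : ∑ k ∈ Finset.Icc 1 K, a k = ∑ i ∈ Finset.range K, a (1 + i) := by
      rw [← Finset.Ico_add_one_right_eq_Icc, Finset.sum_Ico_eq_sum_range]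
      simp
    have h3 : ∑ i ∈ Finset.range K, a (1 + i) = ∑ i ∈ Finset.range K, a (i + 1) := by
      apply Finset.sum_congr rfl; intro i _; rw [Nat.add_comm]
    have hw0 : w 0 = 1 := by simp [hw]
    rw [h1, hw0, ← h3, ← h2, hsum]
    norm_num
  ext i j
  rw [hW, Matrix.mul_assoc, Matrix.mul_apply, hA' i j]
  have hterm : ∀ k : Fin (K+1), A.transpose i k * (Matrix.diagonal w * A) k j
      = (if k = i then d i else -1/2) * w k * (if k = j then d j else -1/2) := by
    intro k
    rw [Matrix.transpose_apply, Matrix.diagonal_mul, hA' k i, hA' k j]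
    by_cases h1 : k = i
    · subst h1
      by_cases h2 : k = j
      · subst h2; simp; ring
      · simp [h2]; ring
    · by_cases h2 : k = j
      · subst h2; simp [h1]; ring
      · simp [h1, h2]; ring
  rw [Finset.sum_congr rfl (fun k _ => hterm k)]
  by_cases hij : i = j
  · subst hij
    have expand : ∀ k : Fin (K+1),
        (if k = i then d i else -1/2) * w k * (if k = i then d i else -1/2)
        = w k / 4 + (if k = i then w k * d i ^ 2 - w k / 4 else 0) := by
      intro k
      by_cases h : k = i
      · subst h; simp; ring
      · simp [h]; ring
    rw [Finset.sum_congr rfl (fun k _ => expand k), Finset.sum_add_distrib,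
      Finset.sum_ite_eq' Finset.univ i (fun k => w k * d i ^ 2 - w k / 4)]
    simp only [Finset.mem_univ, if_true, if_pos rfl]
    rw [← Finset.sum_div, hsw]
    linear_combination (d i - 1/2) * hdw i
  · have expand : ∀ k : Fin (K+1),
        (if k = i then d i else -1/2) * w k * (if k = j then d j else -1/2)
        = w k / 4 + (if k = i then -(w k * d i) / 2 - w k / 4 else 0)
          + (if k = j then -(w k * d j) / 2 - w k / 4 else 0) := by
      intro k
      by_cases h1 : k = i
      · subst h1
        have h2 : ¬ k = j := fun h => hij h
        simp [h2, hij]; ring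
      · by_cases h2 : k = j
        · subst h2; simp [h1]; ring
        · simp [h1, h2]; ring
    rw [Finset.sum_congr rfl (fun k _ => expand k), Finset.sum_add_distrib,
      Finset.sum_add_distrib,
      Finset.sum_ite_eq' Finset.univ i (fun k => -(w k * d i) / 2 - w k / 4),
      Finset.sum_ite_eq' Finset.univ j (fun k => -(w k * d j) / 2 - w k / 4)]
    simp only [Finset.mem_univ, if_true, if_neg hij]
    rw [← Finset.sum_div, hsw]
    linear_combination (-1/2) * hdw i + (-1/2) * hdw j
end
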